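/- Expected length of a stopped busy period from its tail bound: Let b₁ = √(2/π) and b₂ = 1 + 2.5/(b₁√2). Let r > 0 and β > 0 be reals with 2rβ ≥ 3, and let T be a random variable with values in [0,∞] such that for every t with 3/(2r) ≤ t ≤ β one has ℙ(T > t) ≤ (b₁/√2) · (1/√(2rt) + b₂/(2rt)^{3/2}). Then E[min(T, β)] ≤ b₁·√(β/r) + 6/r. -/

import Mathlib

open MeasureTheory ENNReal

private lemma sq_eq_two_lb {x : ℝ} (h : x ^ 2 = 2) (hx : 0 ≤ x) : 1.4 ≤ x := by nlinarith

private lemma sq_eq_three_lb {x : ℝ} (h : x ^ 2 = 3) (hx : 0 ≤ x) : 1.7 ≤ x := by nlinarith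

set_option maxHeartbeats 2000000 in
/-- Expected length of a stopped busy period from its tail bound: with
`b₁ = √(2/π)` and `b₂ = 1 + 2.5/(b₁√2)`, if `r, β > 0`, `2rβ ≥ 3`, and the
`[0,∞]`-valued random variable `T` satisfies
`ℙ(T > t) ≤ (b₁/√2)(1/√(2rt) + b₂/(2rt)^{3/2})` for all `3/(2r) ≤ t ≤ β`,
then `E[min(T, β)] ≤ b₁√(β/r) + 6/r`. -/
theorem stopped_busy_period_expected_length
    {Ω : Type*} [MeasurableSpace Ω] (μ : Measure Ω) [IsProbabilityMeasure μ]
    (b₁ b₂ : ℝ) (hb₁ : b₁ = Real.sqrt (2 / Real.pi))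
    (hb₂ : b₂ = 1 + 2.5 / (b₁ * Real.sqrt 2))
    (r β : ℝ) (hr : 0 < r) (hβ : 0 < β) (hrβ : 3 ≤ 2 * r * β)
    (T : Ω → ℝ≥0∞) (hT : Measurable T)
    (htail : ∀ t : ℝ, 3 / (2 * r) ≤ t → t ≤ β →
      μ {ω | ENNReal.ofReal t < T ω}
        ≤ ENNReal.ofReal
            ((b₁ / Real.sqrt 2)
              * (1 / Real.sqrt (2 * r * t) + b₂ / (2 * r * t) ^ ((3 : ℝ) / 2)))) :
    ∫⁻ ω, min (T ω) (ENNReal.ofReal β) ∂μ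
      ≤ ENNReal.ofReal (b₁ * Real.sqrt (β / r) + 6 / r) := by
  have hr2 : (0:ℝ) < 2 * r := by linarith
  set t₀ : ℝ := 3 / (2 * r) with ht₀def
  have ht₀pos : 0 < t₀ := by positivity
  have ht₀β : t₀ ≤ β := by rw [ht₀def, div_le_iff₀ hr2]; linarith
  -- the truncated variable as a real-valued function
  set f : Ω → ℝ := fun ω => (min (T ω) (ENNReal.ofReal β)).toReal with hfdef
  have hof : ∀ ω, ENNReal.ofReal (f ω) = min (T ω) (ENNReal.ofReal β) := fun ω =>
    ENNReal.ofReal_toReal (ne_of_lt (lt_of_le_of_lt (min_le_right _ _) ENNReal.ofReal_lt_top))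
  have hfmeas : Measurable f := (hT.min measurable_const).ennreal_toReal
  have hfnn : ∀ ω, 0 ≤ f ω := fun ω => ENNReal.toReal_nonneg
  have hfleβ : ∀ ω, f ω ≤ β := fun ω => by
    have := ENNReal.toReal_mono (ENNReal.ofReal_ne_top) (min_le_right (T ω) (ENNReal.ofReal β))
    rwa [ENNReal.toReal_ofReal hβ.le] at this
  -- constants
  set w : ℝ := Real.sqrt 2 with hwdef
  set s : ℝ := Real.sqrt (2 * r) with hsdef
  set sb : ℝ := Real.sqrt β with hsbdef
  set st : ℝ := Real.sqrt t₀ with hstdef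
  set q : ℝ := Real.sqrt (β / r) with hqdef
  set c₁ : ℝ := (b₁ / w) * (2 * r) ^ (-(1/2) : ℝ) with hc₁def
  set c₂ : ℝ := (b₁ / w) * b₂ * (2 * r) ^ (-(3/2) : ℝ) with hc₂def
  -- the tail bound function in rpow form
  have key : ∀ t : ℝ, 0 < t →
      (b₁ / w) * (1 / Real.sqrt (2 * r * t) + b₂ / (2 * r * t) ^ ((3:ℝ)/2))
        = c₁ * t ^ (-(1/2) : ℝ) + c₂ * t ^ (-(3/2) : ℝ) := by
    intro t ht
    have h1 : 1 / Real.sqrt (2 * r * t) = (2 * r) ^ (-(1/2) : ℝ) * t ^ (-(1/2) : ℝ) := by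
      rw [← Real.mul_rpow hr2.le ht.le, Real.rpow_neg (by positivity), one_div,
        Real.sqrt_eq_rpow]
    have h2 : b₂ / (2 * r * t) ^ ((3:ℝ)/2)
        = b₂ * ((2 * r) ^ (-(3/2) : ℝ) * t ^ (-(3/2) : ℝ)) := by
      rw [← Real.mul_rpow hr2.le ht.le, Real.rpow_neg (by positivity), div_eq_mul_inv]
    rw [h1, h2, hc₁def, hc₂def]; ring
  -- positivity facts about the constants
  have hspos : 0 < s := Real.sqrt_pos.mpr hr2
  have hwpos : 0 < w := Real.sqrt_pos.mpr (by norm_num)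
  have hsbpos : 0 < sb := Real.sqrt_pos.mpr hβ
  have hstpos : 0 < st := Real.sqrt_pos.mpr ht₀pos
  have hs2 : s ^ 2 = 2 * r := Real.sq_sqrt hr2.le
  have hw2 : w ^ 2 = 2 := Real.sq_sqrt (by norm_num)
  have hsb2 : sb ^ 2 = β := Real.sq_sqrt hβ.le
  have hst2 : st ^ 2 = t₀ := Real.sq_sqrt ht₀pos.le
  have hb₁pos : 0 < b₁ := by rw [hb₁]; exact Real.sqrt_pos.mpr (by positivity)
  have hb₁le1 : b₁ ≤ 1 := by
    rw [hb₁, show (1:ℝ) = Real.sqrt 1 by simp]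
    exact Real.sqrt_le_sqrt (by rw [div_le_one Real.pi_pos]; exact Real.two_le_pi)
  have hb₁w : 1 ≤ b₁ * w := by
    rw [hb₁, hwdef, ← Real.sqrt_mul (by positivity), show (1:ℝ) = Real.sqrt 1 by simp]
    apply Real.sqrt_le_sqrt
    rw [show (2 / Real.pi * 2 : ℝ) = 4 / Real.pi by ring, le_div_iff₀ Real.pi_pos]
    linarith [Real.pi_le_four]
  have hb₂pos : 0 < b₂ := by rw [hb₂]; positivity
  have hb₂le : b₂ ≤ 3.5 := by
    rw [hb₂]
    have h0 : (2.5:ℝ) / (b₁ * w) ≤ 2.5 := div_le_self (by norm_num) hb₁w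
    linarith only [h0]
  have hc₁nn : 0 ≤ c₁ := by rw [hc₁def]; positivity
  have hc₂nn : 0 ≤ c₂ := by rw [hc₂def]; positivity
  have hq : q * s = w * sb := by
    rw [hqdef, hsdef, hwdef, hsbdef, ← Real.sqrt_mul (by positivity),
      ← Real.sqrt_mul (by norm_num : (0:ℝ) ≤ 2)]
    congr 1
    field_simp
  have hqnn : 0 ≤ q := Real.sqrt_nonneg _
  -- the interval integrals
  have h0uIcc : (0:ℝ) ∉ Set.uIcc t₀ β := by
    rw [Set.uIcc_of_le ht₀β]
    exact fun h => absurd h.1 (by linarith)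
  have hInt1 : IntervalIntegrable (fun t : ℝ => t ^ (-(1/2) : ℝ)) volume t₀ β :=
    intervalIntegral.intervalIntegrable_rpow' (by norm_num)
  have hInt2 : IntervalIntegrable (fun t : ℝ => t ^ (-(3/2) : ℝ)) volume t₀ β :=
    intervalIntegral.intervalIntegrable_rpow (Or.inr h0uIcc)
  have hI1 : ∫ t in t₀..β, t ^ (-(1/2) : ℝ) = 2 * sb - 2 * st := by
    rw [integral_rpow (Or.inl (by norm_num)),
      show (-(1/2) + 1 : ℝ) = 1/2 by norm_num, hsbdef, hstdef,
      Real.sqrt_eq_rpow, Real.sqrt_eq_rpow]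
    ring
  have hI2 : ∫ t in t₀..β, t ^ (-(3/2) : ℝ) = 2 * st⁻¹ - 2 * sb⁻¹ := by
    rw [integral_rpow (Or.inr ⟨by norm_num, h0uIcc⟩),
      show (-(3/2) + 1 : ℝ) = -(1/2) by norm_num,
      Real.rpow_neg hβ.le, Real.rpow_neg ht₀pos.le, hsbdef, hstdef,
      Real.sqrt_eq_rpow, Real.sqrt_eq_rpow]
    ring
  have hIG : ∫ t in t₀..β, (c₁ * t ^ (-(1/2) : ℝ) + c₂ * t ^ (-(3/2) : ℝ))
      = c₁ * (2 * sb - 2 * st) + c₂ * (2 * st⁻¹ - 2 * sb⁻¹) := by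
    rw [intervalIntegral.integral_add (hInt1.const_mul _) (hInt2.const_mul _),
      intervalIntegral.integral_const_mul, intervalIntegral.integral_const_mul, hI1, hI2]
  -- rpow-free forms of the constants
  have hc₁' : c₁ = (b₁ / w) * s⁻¹ := by
    rw [hc₁def, Real.rpow_neg hr2.le, hsdef, Real.sqrt_eq_rpow]
  have hc₂' : c₂ = (b₁ / w) * b₂ * ((2 * r) * s)⁻¹ := by
    rw [hc₂def, Real.rpow_neg hr2.le,
      show ((3:ℝ)/2) = 1 + 1/2 by norm_num, Real.rpow_add hr2, Real.rpow_one,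
      hsdef, Real.sqrt_eq_rpow]
  -- the main real inequality
  have hqs : q = w * sb / s := by rw [eq_div_iff hspos.ne']; linarith only [hq]
  have step1 : c₁ * (2 * sb - 2 * st) ≤ b₁ * q := by
    have e0 : c₁ * (2 * sb) = b₁ * q := by
      rw [hc₁', hqs]
      field_simp
      linear_combination (-1:ℝ) * hw2
    have e1 : c₁ * (2 * sb - 2 * st) ≤ c₁ * (2 * sb) :=
      mul_le_mul_of_nonneg_left (by linarith only [hstpos]) hc₁nn
    linarith only [e0, e1]
  have hm2 : (s * st) ^ 2 = 3 := by
    rw [mul_pow, hs2, hst2, ht₀def]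
    field_simp
  have hm17 : 1.7 ≤ s * st := sq_eq_three_lb hm2 (mul_pos hspos hstpos).le
  have hw14 : 1.4 ≤ w := sq_eq_two_lb hw2 hwpos.le
  have step2 : c₂ * (2 * st⁻¹ - 2 * sb⁻¹) ≤ 9 / (2 * r) := by
    have e1 : c₂ * (2 * st⁻¹ - 2 * sb⁻¹) ≤ c₂ * (2 * st⁻¹) :=
      mul_le_mul_of_nonneg_left (by
        have h0 : 0 ≤ sb⁻¹ := by positivity
        linarith only [h0]) hc₂nn
    have hbb : b₁ * b₂ ≤ 3.5 := by
      have h := mul_le_mul hb₁le1 hb₂le hb₂pos.le zero_le_one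
      linarith only [h]
    have hwm : (2.3:ℝ) ≤ w * (s * st) := by
      have h := mul_le_mul hw14 hm17 (by norm_num) hwpos.le
      linarith only [h]
    have hrw : (b₁ / w) * b₂ * ((2 * r) * s)⁻¹ * (2 * st⁻¹)
        = (2 * b₁ * b₂) / (w * ((2 * r) * s * st)) := by
      field_simp
    have hden : (0:ℝ) < w * ((2 * r) * s * st) := by positivity
    have e2 : c₂ * (2 * st⁻¹) ≤ 9 / (2 * r) := by
      rw [hc₂', hrw, div_le_div_iff₀ hden hr2]
      have f1 := mul_le_mul_of_nonneg_left hwm hr.le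
      have f2 := mul_le_mul_of_nonneg_left hbb hr.le
      linarith only [f1, f2, hr]
    linarith only [e1, e2]
  have hsum : t₀ + 9 / (2 * r) = 6 / r := by rw [ht₀def]; field_simp; ring
  have hfinal : t₀ + (c₁ * (2 * sb - 2 * st) + c₂ * (2 * st⁻¹ - 2 * sb⁻¹))
      ≤ b₁ * q + 6 / r := by linarith only [step1, step2, hsum]
  -- nonnegativity of the main integral value
  have hstsb : st ≤ sb := Real.sqrt_le_sqrt ht₀β
  have hinv : sb⁻¹ ≤ st⁻¹ := by
    apply inv_anti₀ hstpos hstsb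
  have hInn : 0 ≤ c₁ * (2 * sb - 2 * st) + c₂ * (2 * st⁻¹ - 2 * sb⁻¹) :=
    add_nonneg (mul_nonneg hc₁nn (by linarith only [hstsb]))
      (mul_nonneg hc₂nn (by linarith only [hinv]))
  -- vanishing of the tail integrand beyond β
  have hzero : ∫⁻ t in Set.Ioi β, μ {a | t < f a} = 0 := by
    have h0 : ∀ t ∈ Set.Ioi β, μ {a | t < f a} = (fun _ : ℝ => (0:ℝ≥0∞)) t := by
      intro t ht
      have : {a | t < f a} = ∅ :=
        Set.eq_empty_iff_forall_notMem.mpr fun a ha =>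
          absurd ha (not_lt.mpr ((hfleβ a).trans (le_of_lt ht)))
      simp [this]
    rw [setLIntegral_congr_fun measurableSet_Ioi h0,
      lintegral_zero]
  have hdisj : Disjoint (Set.Ioc 0 t₀) (Set.Ioc t₀ β) := Set.Ioc_disjoint_Ioc_of_le le_rfl
  -- bound on the first piece
  have hA : ∫⁻ t in Set.Ioc 0 t₀, μ {a | t < f a} ≤ ENNReal.ofReal t₀ := by
    calc ∫⁻ t in Set.Ioc 0 t₀, μ {a | t < f a}
        ≤ ∫⁻ _ in Set.Ioc 0 t₀, 1 := lintegral_mono fun t => prob_le_one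
      _ = volume (Set.Ioc 0 t₀) := setLIntegral_one _
      _ = ENNReal.ofReal t₀ := by rw [Real.volume_Ioc, sub_zero]
  -- bound on the second piece
  have hgint : IntegrableOn (fun t : ℝ => c₁ * t ^ (-(1/2) : ℝ) + c₂ * t ^ (-(3/2) : ℝ))
      (Set.Ioc t₀ β) volume :=
    (intervalIntegrable_iff_integrableOn_Ioc_of_le ht₀β).mp
      ((hInt1.const_mul c₁).add (hInt2.const_mul c₂))
  have hgnn : 0 ≤ᵐ[volume.restrict (Set.Ioc t₀ β)]
      (fun t : ℝ => c₁ * t ^ (-(1/2) : ℝ) + c₂ * t ^ (-(3/2) : ℝ)) := by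
    rw [Filter.EventuallyLE, ae_restrict_iff' measurableSet_Ioc]
    refine Filter.Eventually.of_forall fun t ht => ?_
    have htpos : 0 < t := lt_trans ht₀pos ht.1
    exact add_nonneg (mul_nonneg hc₁nn (Real.rpow_nonneg htpos.le _))
      (mul_nonneg hc₂nn (Real.rpow_nonneg htpos.le _))
  have hB : ∫⁻ t in Set.Ioc t₀ β, μ {a | t < f a}
      ≤ ENNReal.ofReal (c₁ * (2 * sb - 2 * st) + c₂ * (2 * st⁻¹ - 2 * sb⁻¹)) := by
    calc ∫⁻ t in Set.Ioc t₀ β, μ {a | t < f a}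
        ≤ ∫⁻ t in Set.Ioc t₀ β,
            ENNReal.ofReal (c₁ * t ^ (-(1/2) : ℝ) + c₂ * t ^ (-(3/2) : ℝ)) := by
          apply setLIntegral_mono' measurableSet_Ioc
          intro t ht
          have htpos : 0 < t := lt_trans ht₀pos ht.1
          have hsub : {a | t < f a} ⊆ {ω | ENNReal.ofReal t < T ω} := by
            intro a ha
            simp only [Set.mem_setOf_eq] at ha ⊢
            have h1 : ENNReal.ofReal t < ENNReal.ofReal (f a) :=
              (ENNReal.ofReal_lt_ofReal_iff (lt_trans htpos ha)).mpr ha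
            rw [hof a] at h1
            exact lt_of_lt_of_le h1 (min_le_left _ _)
          refine le_trans (measure_mono hsub) ?_
          refine le_trans (htail t (le_of_lt ht.1) ht.2) ?_
          exact le_of_eq (by rw [key t htpos])
      _ = ENNReal.ofReal (∫ t in Set.Ioc t₀ β,
            (c₁ * t ^ (-(1/2) : ℝ) + c₂ * t ^ (-(3/2) : ℝ))) :=
          (ofReal_integral_eq_lintegral_ofReal hgint hgnn).symm
      _ = ENNReal.ofReal (c₁ * (2 * sb - 2 * st) + c₂ * (2 * st⁻¹ - 2 * sb⁻¹)) := by
          rw [← intervalIntegral.integral_of_le ht₀β, hIG]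
  -- assemble
  calc ∫⁻ ω, min (T ω) (ENNReal.ofReal β) ∂μ
      = ∫⁻ t in Set.Ioi (0:ℝ), μ {a | t < f a} := by
        rw [← lintegral_eq_lintegral_meas_lt μ (Filter.Eventually.of_forall hfnn)
          hfmeas.aemeasurable]
        exact lintegral_congr fun ω => (hof ω).symm
    _ = (∫⁻ t in Set.Ioc 0 t₀, μ {a | t < f a})
          + ∫⁻ t in Set.Ioc t₀ β, μ {a | t < f a} := by
        rw [← Set.Ioc_union_Ioi_eq_Ioi hβ.le,
          lintegral_union measurableSet_Ioi Set.Ioc_disjoint_Ioi_same, hzero, add_zero,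
          ← Set.Ioc_union_Ioc_eq_Ioc ht₀pos.le ht₀β,
          lintegral_union measurableSet_Ioc hdisj]
    _ ≤ ENNReal.ofReal t₀
          + ENNReal.ofReal (c₁ * (2 * sb - 2 * st) + c₂ * (2 * st⁻¹ - 2 * sb⁻¹)) :=
        add_le_add hA hB
    _ = ENNReal.ofReal (t₀ + (c₁ * (2 * sb - 2 * st) + c₂ * (2 * st⁻¹ - 2 * sb⁻¹))) :=
        (ENNReal.ofReal_add ht₀pos.le hInn).symm
    _ ≤ ENNReal.ofReal (b₁ * q + 6 / r) := ENNReal.ofReal_le_ofReal hfinal
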